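/- In the group G'(D̃₄^{(1,1)}), for every j ∈ {1,2,3,4} the relation t₁ t₀ sⱼ t₁ t₀ sⱼ = sⱼ t₁ t₀ sⱼ t₁ t₀ holds (i.e. relation (P3) of the elliptic Dynkin presentation holds in G'). -/

import Mathlib

/-!
STATEMENT 2: In `G'(D̃₄^{(1,1)})`, the relation
`t₁ t₀ sⱼ t₁ t₀ sⱼ = sⱼ t₁ t₀ sⱼ t₁ t₀` holds for every `j ∈ {1,2,3,4}`.
-/

namespace EllipticD4

abbrev GenG' : Type := ℤ ⊕ Fin 4

def tG' (i : ℤ) : FreeGroup GenG' := FreeGroup.of (Sum.inl i)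
def sG' (j : Fin 4) : FreeGroup GenG' := FreeGroup.of (Sum.inr j)

/-- Relators of the new presentation of `G'(D̃₄^{(1,1)})`. -/
def relsG' : Set (FreeGroup GenG') :=
  { r | (∃ i j, r = (tG' i * sG' j * tG' i)⁻¹ * (sG' j * tG' i * sG' j)) ∨
        (∃ i j, i ≠ j ∧ r = (sG' i * sG' j)⁻¹ * (sG' j * sG' i)) ∨
        (∃ i j : ℤ, r = (tG' i * tG' (i - 1))⁻¹ * (tG' j * tG' (j - 1))) }

/-- The image of the generator `tᵢ` in `G'(D̃₄^{(1,1)})`. -/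
def t (i : ℤ) : PresentedGroup relsG' := PresentedGroup.of (Sum.inl i)

/-- The image of the generator `sⱼ` in `G'(D̃₄^{(1,1)})`. -/
def s (j : Fin 4) : PresentedGroup relsG' := PresentedGroup.of (Sum.inr j)

/-- If `a⁻¹ * b` is a relator, then the images of `a` and `b` agree. -/
lemma mk_eq_of_rel {a b : FreeGroup GenG'} (h : a⁻¹ * b ∈ relsG') :
    (QuotientGroup.mk a : PresentedGroup relsG') = QuotientGroup.mk b := by
  have h1 : (QuotientGroup.mk (a⁻¹ * b) : PresentedGroup relsG') = 1 :=
    (QuotientGroup.eq_one_iff _).2 (Subgroup.subset_normalClosure h)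
  have h2 : (QuotientGroup.mk a : PresentedGroup relsG')⁻¹ * QuotientGroup.mk b = 1 := by
    simpa using h1
  exact (inv_mul_eq_one.mp h2)

lemma t_eq (i : ℤ) : t i = QuotientGroup.mk (tG' i) := rfl
lemma s_eq (j : Fin 4) : s j = QuotientGroup.mk (sG' j) := rfl

lemma braid (i : ℤ) (j : Fin 4) : t i * s j * t i = s j * t i * s j := by
  have h := mk_eq_of_rel (a := tG' i * sG' j * tG' i) (b := sG' j * tG' i * sG' j)
    (Or.inl ⟨i, j, rfl⟩)
  simp only [t_eq, s_eq]
  exact h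

lemma shift (i k : ℤ) : t i * t (i - 1) = t k * t (k - 1) := by
  have h := mk_eq_of_rel (a := tG' i * tG' (i - 1)) (b := tG' k * tG' (k - 1))
    (Or.inr (Or.inr ⟨i, k, rfl⟩))
  simp only [t_eq]
  exact h

theorem P3_holds_in_G' (j : Fin 4) :
    t 1 * t 0 * s j * t 1 * t 0 * s j = s j * t 1 * t 0 * s j * t 1 * t 0 := by
  set a := t 2 with ha
  set b := t 1 with hb
  set d := t 0 with hd
  set x := s j with hx
  have h3 : a * b = b * d := by
    have := shift 2 1
    norm_num at this
    simpa [ha, hb, hd] using this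
  have braid1 : b * x * b = x * b * x := braid 1 j
  have braid0 : d * x * d = x * d * x := braid 0 j
  have braid2 : a * x * a = x * a * x := braid 2 j
  calc b * d * x * b * d * x
      = (b * d) * x * b * (d * x) := by group
    _ = (a * b) * x * b * (d * x) := by rw [h3]
    _ = a * (b * x * b) * (d * x) := by group
    _ = a * (x * b * x) * (d * x) := by rw [braid1]
    _ = a * x * b * (x * d * x) := by group
    _ = a * x * b * (d * x * d) := by rw [braid0]
    _ = (a * x) * (b * d) * (x * d) := by group
    _ = (a * x) * (a * b) * (x * d) := by rw [h3]
    _ = (a * x * a) * (b * (x * d)) := by group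
    _ = (x * a * x) * (b * (x * d)) := by rw [braid2]
    _ = x * a * (x * b * x) * d := by group
    _ = x * a * (b * x * b) * d := by rw [← braid1]
    _ = x * (a * b) * (x * (b * d)) := by group
    _ = x * (b * d) * (x * (b * d)) := by rw [h3]
    _ = x * b * d * x * b * d := by group

end EllipticD4
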